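/- arXiv:1604.02389 — 2 statements merged into one kernel-verified Lean document; each statement's English description precedes it below -/
import Mathlib

section
/- Let R be a commutative ring, z ∈ R, and let K be a cochain complex of R-modules such that multiplication by z is injective on K^n for every n. Then multiplication by z gives a short exact sequence of complexes 0 → K → K → K/zK → 0, and for every n the associated long exact cohomology sequence yields a short exact sequence 0 → H^n(K)/z·H^n(K) → H^n(K/zK) → {x ∈ H^{n+1}(K) : z·x = 0} → 0, where the first map is induced by the termwise quotient chain map K → K/zK and the second by the connecting homomorphism. -/
open CategoryTheory

/-- The submodule `z·M` of a module `M`, i.e. the range of multiplication by `z`. -/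
noncomputable def zSMulRange {R : Type*} [CommRing R] (z : R) (M : ModuleCat R) :
    Submodule R M :=
  LinearMap.range (z • (LinearMap.id : M →ₗ[R] M))

theorem modz_le {R : Type*} [CommRing R] (z : R) (K : CochainComplex (ModuleCat R) ℤ)
    (i j : ℤ) :
    zSMulRange z (K.X i) ≤ (zSMulRange z (K.X j)).comap (K.d i j).hom := by
  rintro x ⟨y, rfl⟩
  exact ⟨(K.d i j).hom y, by simp⟩

/-- The termwise quotient complex `K/zK` of a cochain complex of `R`-modules. -/
noncomputable def modz {R : Type*} [CommRing R] (z : R)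
    (K : CochainComplex (ModuleCat R) ℤ) : CochainComplex (ModuleCat R) ℤ where
  X n := ModuleCat.of R (K.X n ⧸ zSMulRange z (K.X n))
  d i j := ModuleCat.ofHom (Submodule.mapQ _ _ (K.d i j).hom (modz_le z K i j))
  shape i j h := by
    have hz : K.d i j = 0 := K.shape i j h
    apply ModuleCat.hom_ext
    apply Submodule.linearMap_qext
    apply LinearMap.ext
    intro y
    have hy : (K.d i j).hom y = 0 := by rw [hz]; rfl
    show ((zSMulRange z (K.X i)).mapQ (zSMulRange z (K.X j)) (K.d i j).hom (modz_le z K i j))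
        ((zSMulRange z (K.X i)).mkQ y) = 0
    rw [Submodule.mkQ_apply, Submodule.mapQ_apply, hy, Submodule.Quotient.mk_zero]
  d_comp_d' i j k hij hjk := by
    apply ModuleCat.hom_ext
    apply Submodule.linearMap_qext
    apply LinearMap.ext
    intro y
    have h0 : (K.d j k).hom ((K.d i j).hom y) = 0 := by
      have hdd := K.d_comp_d i j k
      calc (K.d j k).hom ((K.d i j).hom y) = (K.d i j ≫ K.d j k).hom y := rfl
        _ = (0 : K.X i ⟶ K.X k).hom y := by rw [hdd]
        _ = 0 := rfl
    show ((zSMulRange z (K.X j)).mapQ (zSMulRange z (K.X k)) (K.d j k).hom (modz_le z K j k))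
        (((zSMulRange z (K.X i)).mapQ (zSMulRange z (K.X j)) (K.d i j).hom (modz_le z K i j))
          ((zSMulRange z (K.X i)).mkQ y)) = 0
    rw [Submodule.mkQ_apply, Submodule.mapQ_apply, Submodule.mapQ_apply, h0,
      Submodule.Quotient.mk_zero]

/-- Multiplication by `z`, as a chain map `K ⟶ K`. -/
noncomputable def zSMulMap {R : Type*} [CommRing R] (z : R)
    (K : CochainComplex (ModuleCat R) ℤ) : K ⟶ K where
  f n := ModuleCat.ofHom (z • LinearMap.id : K.X n →ₗ[R] K.X n)
  comm' i j hij := by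
    apply ModuleCat.hom_ext
    apply LinearMap.ext
    intro x
    show (K.d i j).hom ((z • LinearMap.id : K.X i →ₗ[R] K.X i) x)
        = (z • LinearMap.id : K.X j →ₗ[R] K.X j) ((K.d i j).hom x)
    simp

/-- The termwise quotient chain map `K ⟶ K/zK`. -/
noncomputable def modzπ {R : Type*} [CommRing R] (z : R)
    (K : CochainComplex (ModuleCat R) ℤ) : K ⟶ modz z K where
  f n := ModuleCat.ofHom (zSMulRange z (K.X n)).mkQ
  comm' i j hij := by
    apply ModuleCat.hom_ext
    apply LinearMap.ext
    intro x
    show ((zSMulRange z (K.X i)).mapQ (zSMulRange z (K.X j)) (K.d i j).hom (modz_le z K i j))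
        ((zSMulRange z (K.X i)).mkQ x) = (zSMulRange z (K.X j)).mkQ ((K.d i j).hom x)
    rw [Submodule.mkQ_apply, Submodule.mkQ_apply, Submodule.mapQ_apply]

/-- The short complex `K --z--> K ⟶ K/zK` in the category of cochain complexes. -/
noncomputable def modzSES {R : Type*} [CommRing R] (z : R)
    (K : CochainComplex (ModuleCat R) ℤ) :
    ShortComplex (CochainComplex (ModuleCat R) ℤ) :=
  ShortComplex.mk (zSMulMap z K) (modzπ z K) (by
    ext n : 1
    apply ModuleCat.hom_ext
    apply LinearMap.ext
    intro x
    show (zSMulRange z (K.X n)).mkQ ((z • LinearMap.id : K.X n →ₗ[R] K.X n) x) = 0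
    exact (Submodule.Quotient.mk_eq_zero _).2 ⟨x, rfl⟩)


lemma zSMulMap_eq_smul_id {R : Type*} [CommRing R] (z : R)
    (K : CochainComplex (ModuleCat R) ℤ) : zSMulMap z K = z • 𝟙 K := by
  ext n : 1
  rfl

lemma homologyMap_zSMulMap {R : Type*} [CommRing R] (z : R)
    (K : CochainComplex (ModuleCat R) ℤ) (n : ℤ) :
    HomologicalComplex.homologyMap (zSMulMap z K) n = z • 𝟙 (K.homology n) := by
  rw [zSMulMap_eq_smul_id]
  show ShortComplex.homologyMap
    ((HomologicalComplex.shortComplexFunctor (ModuleCat R) _ n).map (z • 𝟙 K)) = _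
  have h2 : (HomologicalComplex.shortComplexFunctor (ModuleCat R) _ n).map (z • 𝟙 K)
      = z • 𝟙 _ := by
    ext <;> rfl
  rw [h2, ShortComplex.homologyMap_smul, ShortComplex.homologyMap_id]
  rfl

lemma homologyMap_zSMulMap_apply {R : Type*} [CommRing R] (z : R)
    (K : CochainComplex (ModuleCat R) ℤ) (n : ℤ) :
    ⇑(HomologicalComplex.homologyMap (zSMulMap z K) n)
      = fun x : K.homology n => z • x := by
  rw [homologyMap_zSMulMap]
  rfl

lemma modzSES_shortExact {R : Type*} [CommRing R] (z : R)
    (K : CochainComplex (ModuleCat R) ℤ)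
    (hinj : ∀ n : ℤ, Function.Injective fun x : K.X n => z • x) :
    (modzSES z K).ShortExact := by
  rw [HomologicalComplex.shortExact_iff_degreewise_shortExact]
  intro n
  have hmono : Mono ((modzSES z K).f.f n) := by
    rw [ModuleCat.mono_iff_injective]
    intro x y hxy
    exact hinj n hxy
  have hepi : Epi ((modzSES z K).g.f n) := by
    rw [ModuleCat.epi_iff_surjective]
    exact Submodule.mkQ_surjective _
  exact
    { exact := by
        rw [ShortComplex.moduleCat_exact_iff]
        intro x hx
        exact (Submodule.Quotient.mk_eq_zero _).1 hx
      mono_f := hmono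
      epi_g := hepi }

/-- If `z` acts injectively on every term of a cochain complex `K` of
`R`-modules, then `0 → K → K → K/zK → 0` is a short exact sequence of complexes, and for every
`n` the associated long exact cohomology sequence yields a short exact sequence
`0 → Hⁿ(K)/z·Hⁿ(K) → Hⁿ(K/zK) → {x ∈ Hⁿ⁺¹(K) : z·x = 0} → 0`, where the first map is induced
by the termwise quotient chain map and the second by the connecting homomorphism.  This is
encoded by exactness of `Hⁿ(K) --z--> Hⁿ(K) --π--> Hⁿ(K/zK) --δ--> Hⁿ⁺¹(K) --z--> Hⁿ⁺¹(K)`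
at the three middle spots. -/
theorem modz_homology_short_exact {R : Type*} [CommRing R] (z : R)
    (K : CochainComplex (ModuleCat R) ℤ)
    (hinj : ∀ n : ℤ, Function.Injective fun x : K.X n => z • x) :
    ∃ hSE : (modzSES z K).ShortExact,
      ∀ n : ℤ,
        Function.Exact (fun x : K.homology n => z • x)
          ⇑(HomologicalComplex.homologyMap (modzπ z K) n) ∧
        Function.Exact ⇑(HomologicalComplex.homologyMap (modzπ z K) n)
          ⇑(hSE.δ n (n + 1) rfl) ∧
        Function.Exact ⇑(hSE.δ n (n + 1) rfl)
          (fun x : K.homology (n + 1) => z • x) := by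
  refine ⟨modzSES_shortExact z K hinj, fun n => ?_⟩
  have hSE := modzSES_shortExact z K hinj
  have h2 := (ShortComplex.ShortExact.moduleCat_exact_iff_function_exact _).1
    (hSE.homology_exact₂ n)
  have h3 := (ShortComplex.ShortExact.moduleCat_exact_iff_function_exact _).1
    (hSE.homology_exact₃ n (n + 1) rfl)
  have h1 := (ShortComplex.ShortExact.moduleCat_exact_iff_function_exact _).1
    (hSE.homology_exact₁ n (n + 1) rfl)
  dsimp only [modzSES, ShortComplex.mk] at h1 h2 h3
  erw [homologyMap_zSMulMap_apply] at h2 h1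
  exact ⟨h2, h3, h1⟩
end

section
/- Let R be a commutative ring, z ∈ R, and let K be a bounded cochain complex of R-modules such that multiplication by z is injective on each term K^n and on each cohomology module H^n(K). Then for every n the map H^n(K)/z·H^n(K) → H^n(K/zK) induced by the termwise quotient chain map K → K/zK (equivalently, the natural map H^n(K) ⊗_R R/(z) → H^n(K ⊗_R R/(z))) is an isomorphism. -/
open CategoryTheory

lemma homologyMap_zsmul {R : Type*} [CommRing R] (z : R)
    {K L : CochainComplex (ModuleCat R) ℤ} (φ : K ⟶ L) (n : ℤ) :
    HomologicalComplex.homologyMap (z • φ) n = z • HomologicalComplex.homologyMap φ n := by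
  have h : (HomologicalComplex.shortComplexFunctor (ModuleCat R) (ComplexShape.up ℤ) n).map
        (z • φ)
      = z • (HomologicalComplex.shortComplexFunctor (ModuleCat R) (ComplexShape.up ℤ) n).map φ :=
    by ext <;> rfl
  rw [HomologicalComplex.homologyMap, h, ShortComplex.homologyMap_smul]
  rfl

/-- Let `K` be a bounded cochain complex of `R`-modules on which
multiplication by `z` is injective on each term and on each cohomology module.  Then for every
`n` the map `Hⁿ(K)/z·Hⁿ(K) → Hⁿ(K/zK)` induced by the termwise quotient chain map
`K ⟶ K/zK` is an isomorphism. -/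
theorem modz_homology_quotient_iso {R : Type*} [CommRing R] (z : R)
    (K : CochainComplex (ModuleCat R) ℤ)
    (hbdd : ∃ a b : ℤ, ∀ n : ℤ, (n < a ∨ b < n) → Limits.IsZero (K.X n))
    (hinj : ∀ n : ℤ, Function.Injective fun x : K.X n => z • x)
    (hinjH : ∀ n : ℤ, Function.Injective fun x : K.homology n => z • x) :
    ∀ n : ℤ,
      ∃ h : LinearMap.range (z • (LinearMap.id : K.homology n →ₗ[R] K.homology n)) ≤
          LinearMap.ker (HomologicalComplex.homologyMap (modzπ z K) n).hom,
        Function.Bijective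
          ⇑(Submodule.liftQ _ (HomologicalComplex.homologyMap (modzπ z K) n).hom h) := by
  intro n
  -- the short exact sequence 0 → K → K → K/zK → 0
  set S : ShortComplex (HomologicalComplex (ModuleCat R) (ComplexShape.up ℤ)) :=
    ShortComplex.mk (zSMulMap z K) (modzπ z K) (by
      ext m : 1
      apply ModuleCat.hom_ext
      apply LinearMap.ext
      intro x
      show ((zSMulRange z (K.X m)).mkQ) ((z • LinearMap.id : K.X m →ₗ[R] K.X m) x) = 0
      rw [Submodule.mkQ_apply, Submodule.Quotient.mk_eq_zero]
      exact ⟨x, rfl⟩) with hSdef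
  have hSE : S.ShortExact := by
    apply HomologicalComplex.shortExact_of_degreewise_shortExact
    intro m
    refine ShortComplex.ShortExact.mk' ?_ ?_ ?_
    · rw [ShortComplex.moduleCat_exact_iff]
      intro x hx
      have hx' : x ∈ zSMulRange z (K.X m) := (Submodule.Quotient.mk_eq_zero _).mp hx
      obtain ⟨y, hy⟩ := hx'
      exact ⟨y, hy⟩
    · rw [ModuleCat.mono_iff_injective]
      exact hinj m
    · rw [ModuleCat.epi_iff_surjective]
      exact Submodule.mkQ_surjective _
  have rel : (ComplexShape.up ℤ).Rel n (n + 1) := rfl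
  have hzf : zSMulMap z K = z • 𝟙 K := by
    ext m : 1
    rfl
  have hH : ∀ k : ℤ, (HomologicalComplex.homologyMap (zSMulMap z K) k).hom
      = (z • LinearMap.id : K.homology k →ₗ[R] K.homology k) := by
    intro k
    rw [hzf, homologyMap_zsmul, HomologicalComplex.homologyMap_id]
    rfl
  -- the connecting map vanishes since z is injective on H^{n+1}
  have h1 := (hSE.homology_exact₁ n (n + 1) rel).moduleCat_range_eq_ker
  have hδ0 : ∀ y, hSE.δ n (n + 1) rel y = 0 := by
    intro y
    have hmem : hSE.δ n (n + 1) rel y ∈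
        LinearMap.ker (HomologicalComplex.homologyMap S.f (n + 1)).hom := by
      rw [← h1]
      exact ⟨y, rfl⟩
    have hk : (HomologicalComplex.homologyMap S.f (n + 1)).hom (hSE.δ n (n + 1) rel y) = 0 := hmem
    apply hinjH (n + 1)
    show z • hSE.δ n (n + 1) rel y = z • (0 : K.homology (n + 1))
    rw [smul_zero]
    calc z • hSE.δ n (n + 1) rel y
        = (z • (LinearMap.id : K.homology (n + 1) →ₗ[R] K.homology (n + 1)))
            (hSE.δ n (n + 1) rel y) := rfl
      _ = (HomologicalComplex.homologyMap S.f (n + 1)).hom (hSE.δ n (n + 1) rel y) := by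
            rw [hH (n + 1)]
      _ = 0 := hk
  -- surjectivity of H^n(K) → H^n(K/zK)
  have h3 := (hSE.homology_exact₃ n (n + 1) rel).moduleCat_range_eq_ker
  have hsurj : Function.Surjective (HomologicalComplex.homologyMap (modzπ z K) n).hom := by
    intro y
    have : y ∈ LinearMap.range (HomologicalComplex.homologyMap S.g n).hom := by
      rw [h3]
      exact hδ0 y
    exact this
  -- exactness at H^n(K)
  have h2 := (hSE.homology_exact₂ n).moduleCat_range_eq_ker
  have h2' : LinearMap.range (z • LinearMap.id : K.homology n →ₗ[R] K.homology n)
      = LinearMap.ker (HomologicalComplex.homologyMap (modzπ z K) n).hom := by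
    rw [← hH n]
    exact h2
  refine ⟨h2'.le, ?_, ?_⟩
  · rw [← LinearMap.ker_eq_bot]
    exact Submodule.ker_liftQ_eq_bot _ _ _ h2'.ge
  · intro y
    obtain ⟨x, hx⟩ := hsurj y
    exact ⟨Submodule.Quotient.mk x, hx⟩
end
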